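/- For any two distinct permutations τ₁, τ₂ of {1,…,n}, viewed as 2ⁿ×2ⁿ unitaries permuting qubits via τ|i₁,…,i_n⟩ = |i_{τ(1)},…,i_{τ(n)}⟩, one has tr(τ₁†τ₂) = 2^l where l is the number of cycles of τ₁⁻¹τ₂; in particular tr(τ₁†τ₂) ≤ 2ⁿ/2, so the phase-optimized distance satisfies D(τ₁,τ₂)² ≥ 1/2. -/

import Mathlib

open Matrix

/-- Frobenius (Hilbert–Schmidt) norm `‖A‖ = √tr(A†A)`. -/
noncomputable def fnorm {ι : Type*} [Fintype ι] (A : Matrix ι ι ℂ) : ℝ :=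
  Real.sqrt (Matrix.trace (Aᴴ * A)).re

/-- Phase-optimized normalized Frobenius distance
`D(A,B) = min_{θ∈[0,2π)} (1/√(2N)) ‖e^{iθ}A − B‖`. -/
noncomputable def uDist {ι : Type*} [Fintype ι] (A B : Matrix ι ι ℂ) : ℝ :=
  sInf ((fun θ : ℝ => (Real.sqrt (2 * Fintype.card ι))⁻¹ *
    fnorm (Complex.exp (θ * Complex.I) • A - B)) '' Set.Ico 0 (2 * Real.pi))

open scoped Classical in
/-- The unitary on (ℂ²)^{⊗n} induced by a permutation of the n qubits:
τ|i₁,…,i_n⟩ = |i_{τ(1)},…,i_{τ(n)}⟩. -/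
noncomputable def permMatrix {n : ℕ} (τ : Equiv.Perm (Fin n)) :
    Matrix (Fin n → Fin 2) (Fin n → Fin 2) ℂ :=
  fun a b => if ∀ k, a k = b (τ k) then 1 else 0



open Matrix Equiv Equiv.Perm Finset
open scoped Classical

-- Number of orbits of a permutation equals number of nontrivial cycles + fixed points
lemma card_quot (σ : Perm (Fin n)) :
    Fintype.card (Quotient (Equiv.Perm.SameCycle.setoid σ)) =
      σ.cycleType.card + (Finset.univ.filter fun i : Fin n => σ i = i).card := by
  have hfix : ∀ {x y : Fin n}, σ.SameCycle x y → σ x = x → y = x := by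
    rintro x y ⟨i, rfl⟩ h
    exact Equiv.Perm.zpow_apply_eq_self_of_apply_eq_self h i
  set g : Fin n → (σ.cycleFactorsFinset ⊕ {x : Fin n // σ x = x}) := fun x =>
    if h : σ x = x then Sum.inr ⟨x, h⟩ else
      Sum.inl ⟨σ.cycleOf x, Equiv.Perm.cycleOf_mem_cycleFactorsFinset_iff.2 (Equiv.Perm.mem_support.2 h)⟩
    with hg
  have hwd : ∀ x y : Fin n, σ.SameCycle x y → g x = g y := by
    intro x y h
    by_cases hx : σ x = x
    · rw [hfix h hx]
    · have hy : ¬ σ y = y := fun hy => hx (by rw [hfix h.symm hy]; exact hy)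
      simp only [hg, dif_neg hx, dif_neg hy]
      exact congrArg Sum.inl (Subtype.ext h.cycleOf_eq)
  let f : Quotient (Equiv.Perm.SameCycle.setoid σ) → _ := Quotient.lift g hwd
  have hbij : Function.Bijective f := by
    constructor
    · rintro ⟨x⟩ ⟨y⟩ hxy
      change g x = g y at hxy
      refine Quotient.sound ?_
      by_cases hx : σ x = x <;> by_cases hy : σ y = y <;>
        simp only [hg, dif_pos, dif_neg, hx, hy] at hxy
      · cases hxy; exact Equiv.Perm.SameCycle.refl σ x
      · exact (Sum.inr_ne_inl hxy).elim
      · exact (Sum.inl_ne_inr hxy).elim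
      · have hco : σ.cycleOf x = σ.cycleOf y := congrArg Subtype.val (Sum.inl.inj hxy)
        by_contra hsc
        have h1 : σ.cycleOf x y = y := Equiv.Perm.cycleOf_apply_of_not_sameCycle hsc
        rw [hco, Equiv.Perm.cycleOf_apply_self] at h1
        exact hy h1
    · rintro (⟨c, hc⟩ | ⟨x, hx⟩)
      · obtain ⟨hcyc, hsupp⟩ := Equiv.Perm.mem_cycleFactorsFinset_iff.1 hc
        obtain ⟨x, hxc⟩ := hcyc.nonempty_support
        have hxs : σ x ≠ x := by
          rw [← hsupp x hxc]; exact Equiv.Perm.mem_support.1 hxc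
        refine ⟨⟦x⟧, ?_⟩
        show g x = _
        rw [hg]
        simp only [dif_neg hxs]
        exact congrArg Sum.inl (Subtype.ext (Equiv.Perm.cycle_is_cycleOf hxc hc).symm)
      · exact ⟨⟦x⟧, by show g x = _; rw [hg]; simp only [dif_pos hx]⟩
  rw [Fintype.card_of_bijective hbij]
  simp only [Fintype.card_sum, Fintype.card_coe, Fintype.card_subtype]
  congr 1
  simp [Equiv.Perm.cycleType]

lemma card_invariant (σ : Equiv.Perm (Fin n)) :
    (Finset.univ.filter fun b : Fin n → Fin 2 => ∀ x, b (σ x) = b x).card =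
      2 ^ (σ.cycleType.card + (Finset.univ.filter fun i : Fin n => σ i = i).card) := by
  rw [← Fintype.card_subtype]
  have hconst : ∀ (b : Fin n → Fin 2), (∀ x, b (σ x) = b x) →
      ∀ x y : Fin n, σ.SameCycle x y → b x = b y := by
    intro b hb x y ⟨i, hi⟩
    subst hi
    suffices h : ∀ (i : ℤ) (x : Fin n), b ((σ ^ i) x) = b x from (h i x).symm
    intro i
    induction i using Int.induction_on with
    | zero => simp
    | succ i ih =>
        intro x
        rw [_root_.zpow_add, zpow_one, Equiv.Perm.mul_apply, ih, hb]
    | pred i ih =>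
        intro x
        rw [_root_.zpow_sub, zpow_one, Equiv.Perm.mul_apply, ih]
        have h2 := hb (σ⁻¹ x)
        rw [Equiv.Perm.coe_inv, Equiv.apply_symm_apply, ← Equiv.Perm.coe_inv] at h2
        rw [h2]
  have e1 : {b : Fin n → Fin 2 // ∀ x, b (σ x) = b x} ≃
      (Quotient (Equiv.Perm.SameCycle.setoid σ) → Fin 2) :=
    { toFun := fun b => Quotient.lift b.1 (hconst b.1 b.2)
      invFun := fun g => ⟨fun x => g ⟦x⟧, fun x =>
        congrArg g (Quotient.sound (⟨1, by simp⟩ : σ.SameCycle x (σ x))).symm⟩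
      left_inv := fun b => rfl
      right_inv := fun g => funext fun q => by induction q using Quotient.ind; rfl }
  rw [Fintype.card_congr e1, Fintype.card_fun, card_quot]
  rfl

lemma trace_count (τ₁ τ₂ : Equiv.Perm (Fin n)) :
    Matrix.trace ((_root_.permMatrix τ₁)ᴴ * _root_.permMatrix τ₂) =
      ((Finset.univ.filter fun a : Fin n → Fin 2 =>
        ∀ k, a (τ₁ k) = a (τ₂ k)).card : ℂ) := by
  have key : ∀ a : Fin n → Fin 2,
      (∑ b : Fin n → Fin 2, star (if ∀ k, b k = a (τ₁ k) then (1 : ℂ) else 0) *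
        (if ∀ k, b k = a (τ₂ k) then (1 : ℂ) else 0)) =
      if ∀ k, a (τ₁ k) = a (τ₂ k) then 1 else 0 := by
    intro a
    by_cases h : ∀ k, a (τ₁ k) = a (τ₂ k)
    · rw [if_pos h, Finset.sum_eq_single (fun k => a (τ₁ k))]
      · have h1 : ∀ k, (fun k => a (τ₁ k)) k = a (τ₁ k) := fun _ => rfl
        have h2 : ∀ k, (fun k => a (τ₁ k)) k = a (τ₂ k) := h
        rw [if_pos h1, if_pos h2]
        simp
      · intro b _ hb
        have h1 : ¬ ∀ k, b k = a (τ₁ k) := fun hh => hb (funext hh)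
        rw [if_neg h1]
        simp
      · simp
    · rw [if_neg h]
      apply Finset.sum_eq_zero
      intro b _
      by_cases h1 : ∀ k, b k = a (τ₁ k)
      · have h2 : ¬ ∀ k, b k = a (τ₂ k) := fun h2 => h fun k => (h1 k).symm.trans (h2 k)
        rw [if_neg h2, mul_zero]
      · rw [if_neg h1]
        simp
  simp only [Matrix.trace, Matrix.diag, Matrix.mul_apply, Matrix.conjTranspose_apply,
    _root_.permMatrix]
  rw [Finset.sum_congr rfl fun a _ => key a, Finset.sum_boole]

lemma count_transfer (τ₁ τ₂ : Equiv.Perm (Fin n)) :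
    (Finset.univ.filter fun a : Fin n → Fin 2 => ∀ k, a (τ₁ k) = a (τ₂ k)).card =
      (Finset.univ.filter fun b : Fin n → Fin 2 =>
        ∀ x, b ((τ₁⁻¹ * τ₂) x) = b x).card := by
  apply Finset.card_bij (fun a _ => fun k => a (τ₁ k))
  · intro a ha
    simp only [Finset.mem_filter, Finset.mem_univ, true_and] at ha ⊢
    intro x
    show a (τ₁ ((τ₁⁻¹ * τ₂) x)) = a (τ₁ x)
    rw [Equiv.Perm.mul_apply, Equiv.Perm.coe_inv, Equiv.apply_symm_apply]
    exact (ha x).symm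
  · intro a ha a' ha' h
    funext k
    have := congrFun h (τ₁⁻¹ k)
    simpa [Equiv.Perm.coe_inv] using this
  · intro b hb
    simp only [Finset.mem_filter, Finset.mem_univ, true_and] at hb ⊢
    refine ⟨fun k => b (τ₁⁻¹ k), fun k => ?_, ?_⟩
    · show b (τ₁⁻¹ (τ₁ k)) = b (τ₁⁻¹ (τ₂ k))
      rw [Equiv.Perm.coe_inv, Equiv.symm_apply_apply]
      have := hb k
      rw [Equiv.Perm.mul_apply] at this
      exact this.symm
    · funext k
      show b (τ₁⁻¹ (τ₁ k)) = b k
      rw [Equiv.Perm.coe_inv, Equiv.symm_apply_apply]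

open scoped Classical in
/-- For distinct permutations τ₁ ≠ τ₂ of the n qubits,
tr(τ₁†τ₂) = 2^l where l is the number of cycles (including fixed points) of τ₁⁻¹τ₂;
in particular tr(τ₁†τ₂) ≤ 2ⁿ/2 and D(τ₁,τ₂)² ≥ 1/2. -/
theorem perm_matrix_trace {n : ℕ} (hn : 2 ≤ n)
    (τ₁ τ₂ : Equiv.Perm (Fin n)) (hne : τ₁ ≠ τ₂) :
    Matrix.trace ((permMatrix τ₁)ᴴ * permMatrix τ₂) =
        (2 : ℂ) ^ ((τ₁⁻¹ * τ₂).cycleType.card +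
          (Finset.univ.filter fun i => (τ₁⁻¹ * τ₂) i = i).card) ∧
      (2 : ℝ) ^ ((τ₁⁻¹ * τ₂).cycleType.card +
          (Finset.univ.filter fun i => (τ₁⁻¹ * τ₂) i = i).card) ≤ 2 ^ n / 2 ∧
      1 / 2 ≤ uDist (permMatrix τ₁) (permMatrix τ₂) ^ 2 := by
  classical
  set σ : Equiv.Perm (Fin n) := τ₁⁻¹ * τ₂ with hσdef
  set L : ℕ := σ.cycleType.card + (Finset.univ.filter fun i => σ i = i).card with hL
  have hσ1 : σ ≠ 1 := by
    intro h
    exact hne (inv_mul_eq_one.mp h)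
  -- L ≤ n - 1
  have hc1 : 1 ≤ σ.cycleType.card := Equiv.Perm.card_cycleType_pos.mpr hσ1
  have hc2 : σ.cycleType.card • 2 ≤ σ.cycleType.sum :=
    Multiset.card_nsmul_le_sum fun x hx => Equiv.Perm.two_le_of_mem_cycleType hx
  have hsum : σ.cycleType.sum = σ.support.card := Equiv.Perm.sum_cycleType σ
  have hsupp : σ.support = Finset.univ.filter fun x => ¬ σ x = x := by
    ext x; simp [Equiv.Perm.mem_support]
  have hsplit : (Finset.univ.filter fun i : Fin n => σ i = i).card + σ.support.card = n := by
    rw [hsupp]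
    rw [Finset.card_filter_add_card_filter_not]
    simp
  have hLn : L + 1 ≤ n := by
    rw [smul_eq_mul, hsum] at hc2
    rw [hL]
    omega
  have hLn' : L ≤ n - 1 := by omega
  have hn1 : n - 1 + 1 = n := by omega
  set m : ℕ := (Finset.univ.filter fun a : Fin n → Fin 2 =>
    ∀ k, a (τ₁ k) = a (τ₂ k)).card with hmdef
  have hm : m = 2 ^ L := by
    rw [hmdef, count_transfer τ₁ τ₂, card_invariant σ]
  have hmn : 2 * m ≤ 2 ^ n := by
    rw [hm, ← pow_succ']
    exact Nat.pow_le_pow_right (by norm_num) hLn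
  -- first claim
  have htr : Matrix.trace ((permMatrix τ₁)ᴴ * permMatrix τ₂) = ((m : ℕ) : ℂ) :=
    trace_count τ₁ τ₂
  refine ⟨?_, ?_, ?_⟩
  · rw [htr, hm]; push_cast; ring
  · have h1 : (2 : ℝ) ^ L ≤ 2 ^ (n - 1) :=
      pow_le_pow_right₀ (by norm_num) hLn'
    have h2 : (2 : ℝ) ^ (n - 1) = 2 ^ n / 2 := by
      rw [eq_div_iff (two_ne_zero), ← pow_succ, hn1]
    rw [← h2]; exact h1
  -- distance claim
  · set A := permMatrix τ₁
    set B := permMatrix τ₂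
    have hAA : Matrix.trace (Aᴴ * A) = ((2 ^ n : ℕ) : ℂ) := by
      rw [trace_count τ₁ τ₁]
      congr 1
      rw [Finset.filter_true_of_mem (fun a _ => fun k => rfl), Finset.card_univ]
      simp
    have hBB : Matrix.trace (Bᴴ * B) = ((2 ^ n : ℕ) : ℂ) := by
      rw [trace_count τ₂ τ₂]
      congr 1
      rw [Finset.filter_true_of_mem (fun a _ => fun k => rfl), Finset.card_univ]
      simp
    have hBA : Matrix.trace (Bᴴ * A) = ((m : ℕ) : ℂ) := by
      rw [trace_count τ₂ τ₁, hmdef]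
      congr 2
      ext a
      simp [eq_comm]
    have hcard : (Fintype.card (Fin n → Fin 2) : ℝ) = 2 ^ n := by
      simp
    have key : ∀ θ : ℝ, (Real.sqrt 2)⁻¹ ≤
        (Real.sqrt (2 * Fintype.card (Fin n → Fin 2)))⁻¹ *
          fnorm (Complex.exp (θ * Complex.I) • A - B) := by
      intro θ
      set c : ℂ := Complex.exp (θ * Complex.I) with hcdef
      have habs : ‖c‖ = 1 := by
        rw [hcdef, Complex.norm_exp]
        simp
      have hstar : star c * c = 1 := by
        have h0 : star c = (starRingEnd ℂ) c := rfl
        rw [h0, mul_comm, Complex.mul_conj, Complex.normSq_eq_norm_sq, habs]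
        norm_num
      have ht : Matrix.trace ((c • A - B)ᴴ * (c • A - B)) =
          (star c * c) * Matrix.trace (Aᴴ * A) - star c * Matrix.trace (Aᴴ * B) -
            c * Matrix.trace (Bᴴ * A) + Matrix.trace (Bᴴ * B) := by
        simp only [Matrix.conjTranspose_sub, Matrix.conjTranspose_smul, Matrix.sub_mul,
          Matrix.mul_sub, smul_mul_assoc, mul_smul_comm, Matrix.trace_sub,
          Matrix.trace_add, Matrix.trace_smul, smul_eq_mul, smul_smul]
        ring
      rw [hstar, one_mul, hAA, hBB, htr, hBA] at ht
      have hrebound : ∀ z : ℂ, ‖z‖ = 1 → (z * ((m : ℕ) : ℂ)).re ≤ (m : ℝ) := by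
        intro z hz
        refine le_trans (Complex.re_le_norm _) ?_
        rw [show ‖z * ((m : ℕ) : ℂ)‖ = ‖z‖ * ‖((m : ℕ) : ℂ)‖
          from norm_mul _ _, hz, one_mul, Complex.norm_natCast]
      have habs' : ‖star c‖ = 1 := by
        rw [show star c = (starRingEnd ℂ) c from rfl, Complex.norm_conj]
        exact habs
      have hre : (2 : ℝ) ^ n ≤ (Matrix.trace ((c • A - B)ᴴ * (c • A - B))).re := by
        rw [ht]
        simp only [Complex.add_re, Complex.sub_re, Complex.natCast_re]
        have h1 := hrebound (star c) habs'
        have h2 := hrebound c habs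
        have h3 : (2 : ℝ) * m ≤ 2 ^ n := by
          exact_mod_cast Nat.cast_le.mpr hmn
        push_cast
        linarith
      have hfn : Real.sqrt ((2 : ℝ) ^ n) ≤ fnorm (c • A - B) := by
        unfold fnorm
        exact Real.sqrt_le_sqrt hre
      have hsq : Real.sqrt (2 * (Fintype.card (Fin n → Fin 2) : ℝ)) =
          Real.sqrt 2 * Real.sqrt ((2 : ℝ) ^ n) := by
        rw [hcard, Real.sqrt_mul (by norm_num)]
      have hpos : (0 : ℝ) < Real.sqrt ((2 : ℝ) ^ n) := Real.sqrt_pos.mpr (by positivity)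
      calc (Real.sqrt 2)⁻¹
          = (Real.sqrt (2 * (Fintype.card (Fin n → Fin 2) : ℝ)))⁻¹ *
              Real.sqrt ((2 : ℝ) ^ n) := by
            rw [hsq, mul_inv, mul_assoc, inv_mul_cancel₀ hpos.ne', mul_one]
        _ ≤ (Real.sqrt (2 * (Fintype.card (Fin n → Fin 2) : ℝ)))⁻¹ *
              fnorm (c • A - B) := by
            exact mul_le_mul_of_nonneg_left hfn (by positivity)
    have hud : (Real.sqrt 2)⁻¹ ≤ uDist A B := by
      rw [uDist]
      apply le_csInf
      · exact ⟨_, ⟨0, ⟨le_refl 0, by linarith [Real.pi_pos]⟩, rfl⟩⟩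
      · rintro x ⟨θ, hθ, rfl⟩
        exact key θ
    calc (1 : ℝ) / 2 = ((Real.sqrt 2)⁻¹) ^ 2 := by
          rw [inv_pow, Real.sq_sqrt (by norm_num : (0:ℝ) ≤ 2)]
          norm_num
        _ ≤ uDist A B ^ 2 := by
          apply pow_le_pow_left₀ (by positivity) hud
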